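/- Let H_n be the degree-based Hoover index of a random spider tree at time n: H_n = (Σ_{i ∈ V_n} |(n+3) deg_i - 2(n+2)|) / (4(n+2)(n+3)). Then H_n = (n+1) L_n / (2(n+3)(n+2)), E[H_n] = (p n^2 + 3n + 3 - p) / (2(n+3)(n+2)), Var(H_n) = p(1-p)(n^2-1)(n+1) / (4(n+3)^2(n+2)^2), and for every r > 0, H_n → p/2 in L^r as n → ∞. -/

import Mathlib

open Filter MeasureTheory Asymptotics Topology

/-- Expectation of `f` under a Binomial(m, p) distribution, as a finite sum. -/
noncomputable def binExp (m : ℕ) (p : ℝ) (f : ℕ → ℝ) : ℝ :=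
  ∑ k ∈ Finset.range (m+1), (m.choose k : ℝ) * p^k * (1-p)^(m-k) * f k

/-- Variance of `f` under a Binomial(m, p) distribution. -/
noncomputable def binVar (m : ℕ) (p : ℝ) (f : ℕ → ℝ) : ℝ :=
  binExp m p (fun k => (f k - binExp m p f)^2)

/-- The degree-based Hoover index of a random spider tree at time n, as a function of the
number of recruiting steps k made by the centroid (so that L_n = k + 3). -/
noncomputable def hooverF : ℕ → ℕ → ℝ :=
  (fun (n : ℕ) (k : ℕ) => ((n : ℝ)+1)*((k : ℝ)+3) / (2*((n : ℝ)+3)*((n : ℝ)+2)))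

namespace Stmt19Aux

open Finset

lemma sumW (m:ℕ)(p q:ℝ)(h:p+q=1): ∑ k ∈ range (m+1), (m.choose k:ℝ) * p^k * q^(m-k) = 1 := by
  have h2 := add_pow p q m
  rw [h, one_pow] at h2
  rw [h2]
  exact Finset.sum_congr rfl fun k _ => by ring

lemma sumK (m:ℕ)(p q:ℝ)(h:p+q=1): ∑ k ∈ range (m+1), (k:ℝ) * ((m.choose k:ℝ) * p^k * q^(m-k)) = m*p := by
  induction m with
  | zero => simp
  | succ m' ih =>
    clear ih
    rw [Finset.sum_range_succ']
    simp only [Nat.cast_zero, zero_mul, add_zero]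
    push_cast
    have key : ∀ i ∈ range (m'+1), ((i:ℝ)+1) * (((m'+1).choose (i+1):ℝ) * p^(i+1) * q^(m'-i))
        = ((m':ℝ)+1) * p * ((m'.choose i:ℝ) * p^i * q^(m'-i)) := by
      intro i _
      have hc : (m'+1) * m'.choose i = (m'+1).choose (i+1) * (i+1) := Nat.add_one_mul_choose_eq m' i
      have hc' : ((m':ℝ)+1) * (m'.choose i:ℝ) = ((m'+1).choose (i+1):ℝ) * ((i:ℝ)+1) := by
        exact_mod_cast congrArg (Nat.cast (R:=ℝ)) hc
      rw [pow_succ]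
      linear_combination (p^i * p * q^(m'-i)) * hc'.symm
    calc ∑ i ∈ range (m'+1), ((i:ℝ)+1) * (((m'+1).choose (i+1):ℝ) * p^(i+1) * q^(m'-i))
        = ∑ i ∈ range (m'+1), ((m':ℝ)+1) * p * ((m'.choose i:ℝ) * p^i * q^(m'-i)) :=
          Finset.sum_congr rfl key
      _ = ((m':ℝ)+1) * p * ∑ i ∈ range (m'+1), ((m'.choose i:ℝ) * p^i * q^(m'-i)) := by
          rw [Finset.mul_sum]
      _ = ((m':ℝ)+1) * p := by rw [sumW m' p q h]; ring

lemma sumKK (m:ℕ)(p q:ℝ)(h:p+q=1): ∑ k ∈ range (m+1), (k:ℝ)*((k:ℝ)-1) * ((m.choose k:ℝ) * p^k * q^(m-k)) = m*((m:ℝ)-1)*p^2 := by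
  induction m with
  | zero => simp
  | succ m' ih =>
    clear ih
    rw [Finset.sum_range_succ']
    simp only [Nat.cast_zero, zero_mul, add_zero]
    push_cast
    have key : ∀ i ∈ range (m'+1), ((i:ℝ)+1)*(((i:ℝ)+1)-1) * (((m'+1).choose (i+1):ℝ) * p^(i+1) * q^(m'-i))
        = ((m':ℝ)+1) * p * ((i:ℝ) * ((m'.choose i:ℝ) * p^i * q^(m'-i))) := by
      intro i _
      have hc : (m'+1) * m'.choose i = (m'+1).choose (i+1) * (i+1) := Nat.add_one_mul_choose_eq m' i
      have hc' : ((m':ℝ)+1) * (m'.choose i:ℝ) = ((m'+1).choose (i+1):ℝ) * ((i:ℝ)+1) := by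
        exact_mod_cast congrArg (Nat.cast (R:=ℝ)) hc
      rw [pow_succ]
      linear_combination ((i:ℝ) * p^i * p * q^(m'-i)) * hc'.symm
    calc ∑ i ∈ range (m'+1), ((i:ℝ)+1)*(((i:ℝ)+1)-1) * (((m'+1).choose (i+1):ℝ) * p^(i+1) * q^(m'-i))
        = ∑ i ∈ range (m'+1), ((m':ℝ)+1) * p * ((i:ℝ) * ((m'.choose i:ℝ) * p^i * q^(m'-i))) :=
          Finset.sum_congr rfl key
      _ = ((m':ℝ)+1) * p * ∑ i ∈ range (m'+1), (i:ℝ) * ((m'.choose i:ℝ) * p^i * q^(m'-i)) := by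
          rw [Finset.mul_sum]
      _ = ((m':ℝ)+1)*(((m':ℝ)+1)-1)*p^2 := by rw [sumK m' p q h]; ring

lemma binExp_affine (m:ℕ)(p a b:ℝ) : binExp m p (fun k => a*(k:ℝ)+b) = a*((m:ℝ)*p)+b := by
  unfold binExp
  have : ∀ k ∈ range (m+1), (m.choose k:ℝ) * p^k * (1-p)^(m-k) * (a*(k:ℝ)+b)
      = a * ((k:ℝ) * ((m.choose k:ℝ) * p^k * (1-p)^(m-k))) + b * ((m.choose k:ℝ) * p^k * (1-p)^(m-k)) :=
    fun k _ => by ring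
  rw [Finset.sum_congr rfl this, Finset.sum_add_distrib, ← Finset.mul_sum, ← Finset.mul_sum,
    sumK m p (1-p) (by ring), sumW m p (1-p) (by ring), mul_one]

lemma binExp_affine_sq (m:ℕ)(p a b:ℝ) : binExp m p (fun k => (a*(k:ℝ)+b)^2)
    = a^2*((m:ℝ)*((m:ℝ)-1)*p^2) + (a^2+2*a*b)*((m:ℝ)*p) + b^2 := by
  unfold binExp
  have : ∀ k ∈ range (m+1), (m.choose k:ℝ) * p^k * (1-p)^(m-k) * ((a*(k:ℝ)+b)^2)
      = a^2 * ((k:ℝ)*((k:ℝ)-1) * ((m.choose k:ℝ) * p^k * (1-p)^(m-k)))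
        + (a^2+2*a*b) * ((k:ℝ) * ((m.choose k:ℝ) * p^k * (1-p)^(m-k)))
        + b^2 * ((m.choose k:ℝ) * p^k * (1-p)^(m-k)) :=
    fun k _ => by ring
  rw [Finset.sum_congr rfl this, Finset.sum_add_distrib, Finset.sum_add_distrib,
    ← Finset.mul_sum, ← Finset.mul_sum, ← Finset.mul_sum,
    sumKK m p (1-p) (by ring), sumK m p (1-p) (by ring), sumW m p (1-p) (by ring), mul_one]

lemma binVar_affine (m:ℕ)(p a b:ℝ) : binVar m p (fun k => a*(k:ℝ)+b) = a^2*(m:ℝ)*p*(1-p) := by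
  unfold binVar
  rw [binExp_affine]
  have : (fun k:ℕ => (a*(k:ℝ)+b - (a*((m:ℝ)*p)+b))^2) = fun k:ℕ => (a*(k:ℝ) + (-(a*((m:ℝ)*p))))^2 :=
    funext fun k => by ring
  rw [this, binExp_affine_sq]
  ring

lemma binExp_sq_shift (m:ℕ)(p a b c:ℝ) : binExp m p (fun k => (a*(k:ℝ)+b - c)^2)
    = a^2*(m:ℝ)*p*(1-p) + (a*((m:ℝ)*p)+b-c)^2 := by
  have : (fun k:ℕ => (a*(k:ℝ)+b - c)^2) = fun k:ℕ => (a*(k:ℝ) + (b-c))^2 :=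
    funext fun k => by ring
  rw [this, binExp_affine_sq]
  ring

lemma hoover_eq (n : ℕ) : hooverF n = fun k : ℕ =>
    (((n:ℝ)+1)/(2*((n:ℝ)+3)*((n:ℝ)+2))) * (k:ℝ) + 3*(((n:ℝ)+1)/(2*((n:ℝ)+3)*((n:ℝ)+2))) :=
  funext fun k => by unfold hooverF; ring

lemma binExp_mono (m:ℕ){p:ℝ} (hp0 : 0 ≤ p) (hp1 : p ≤ 1) {f g : ℕ → ℝ}
    (h : ∀ k ∈ range (m+1), f k ≤ g k) : binExp m p f ≤ binExp m p g := by
  apply Finset.sum_le_sum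
  intro k hk
  have hw : 0 ≤ (m.choose k:ℝ) * p^k * (1-p)^(m-k) :=
    mul_nonneg (mul_nonneg (Nat.cast_nonneg _) (pow_nonneg hp0 _)) (pow_nonneg (by linarith) _)
  exact mul_le_mul_of_nonneg_left (h k hk) hw

lemma binExp_nonneg (m:ℕ){p:ℝ} (hp0 : 0 ≤ p) (hp1 : p ≤ 1) {f : ℕ → ℝ}
    (h : ∀ k, 0 ≤ f k) : 0 ≤ binExp m p f := by
  apply Finset.sum_nonneg
  intro k _
  have hw : 0 ≤ (m.choose k:ℝ) * p^k * (1-p)^(m-k) :=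
    mul_nonneg (mul_nonneg (Nat.cast_nonneg _) (pow_nonneg hp0 _)) (pow_nonneg (by linarith) _)
  exact mul_nonneg hw (h k)

lemma binExp_const_add_smul (m:ℕ)(p c s:ℝ)(f:ℕ→ℝ) :
    binExp m p (fun k => c + s * f k) = c + s * binExp m p f := by
  unfold binExp
  have : ∀ k ∈ range (m+1), (m.choose k:ℝ) * p^k * (1-p)^(m-k) * (c + s * f k)
      = c * ((m.choose k:ℝ) * p^k * (1-p)^(m-k)) + s * ((m.choose k:ℝ) * p^k * (1-p)^(m-k) * f k) :=
    fun k _ => by ring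
  rw [Finset.sum_congr rfl this, Finset.sum_add_distrib, ← Finset.mul_sum, ← Finset.mul_sum,
    sumW m p (1-p) (by ring), mul_one]

lemma ptwise {x δ r : ℝ} (hx0 : 0 ≤ x) (hx1 : x ≤ 1) (hδ : 0 < δ) (hr : 0 < r) :
    x ^ r ≤ δ ^ r + (1/δ^2) * x^2 := by
  rcases le_or_gt x δ with h | h
  · have h1 : x ^ r ≤ δ ^ r := Real.rpow_le_rpow hx0 h hr.le
    have h2 : (0:ℝ) ≤ (1/δ^2) * x^2 := by positivity
    linarith
  · have h1 : x ^ r ≤ 1 := Real.rpow_le_one hx0 hx1 hr.le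
    have h2 : (1:ℝ) ≤ (1/δ^2) * x^2 := by
      rw [one_div, inv_mul_eq_div, le_div_iff₀ (by positivity), one_mul]
      nlinarith
    have h3 : (0:ℝ) ≤ δ ^ r := Real.rpow_nonneg hδ.le r
    linarith

/-- The mean of `hooverF`. -/
lemma mean_eq (p : ℝ) (n : ℕ) (hn : 1 ≤ n) : binExp (n-1) p (hooverF n) =
    (p*(n : ℝ)^2 + 3*(n : ℝ) + 3 - p) / (2*((n : ℝ)+3)*((n : ℝ)+2)) := by
  rw [hoover_eq, binExp_affine]
  have hm : ((n-1:ℕ):ℝ) = (n:ℝ)-1 := by rw [Nat.cast_sub hn, Nat.cast_one]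
  rw [hm]
  have h3 : ((n:ℝ)+3) ≠ 0 := by positivity
  have h2 : ((n:ℝ)+2) ≠ 0 := by positivity
  field_simp
  ring

/-- Second moment of `hooverF n - p/2` and its decay bound. -/
lemma Qbound (p : ℝ) (hp0 : 0 < p) (hp1 : p < 1) (n : ℕ) (hn : 1 ≤ n) :
    binExp (n-1) p (fun k => (hooverF n k - p/2)^2) ≤ 14/((n:ℝ)+1) := by
  have hx1 : (1:ℝ) ≤ (n:ℝ) := by exact_mod_cast hn
  set x : ℝ := (n:ℝ) with hxdef
  have hm : ((n-1:ℕ):ℝ) = x - 1 := by rw [Nat.cast_sub hn, Nat.cast_one]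
  have h3 : (0:ℝ) < x+3 := by linarith
  have h2 : (0:ℝ) < x+2 := by linarith
  have h1 : (0:ℝ) < x+1 := by linarith
  have hfeq : (fun k : ℕ => (hooverF n k - p/2)^2)
      = fun k : ℕ => ((x+1)/(2*(x+3)*(x+2)) * (k:ℝ) + 3*((x+1)/(2*(x+3)*(x+2))) - p/2)^2 := by
    funext k
    rw [hoover_eq]
  rw [hfeq, binExp_sq_shift, hm]
  set a : ℝ := (x+1)/(2*(x+3)*(x+2)) with hadef
  -- variance part
  have hvar : a^2*(x-1)*p*(1-p) ≤ 1/(x+1) := by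
    have ha : a^2 = (x+1)^2/(4*(x+3)^2*(x+2)^2) := by
      rw [hadef, div_pow]; congr 1; ring
    rw [ha, div_mul_eq_mul_div, div_mul_eq_mul_div, div_mul_eq_mul_div,
      div_le_div_iff₀ (by positivity) h1]
    nlinarith [sq_nonneg (2*p-1), mul_pos h3 h2, sq_nonneg (x+2), sq_nonneg (x-1),
      mul_nonneg (mul_nonneg (sq_nonneg (x+1)) (by linarith : (0:ℝ) ≤ x-1)) (by linarith : (0:ℝ) ≤ x+1),
      mul_pos (mul_pos h3 h3) (mul_pos h2 h2), mul_pos hp0 (by linarith : (0:ℝ) < 1-p)]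
  -- bias part
  have hbias : (a*((x-1)*p) + 3*a - p/2)^2 ≤ 13/(x+1) := by
    have hE : a*((x-1)*p) + 3*a - p/2 = ((3-5*p)*x + (3-7*p))/(2*(x+3)*(x+2)) := by
      rw [hadef]
      field_simp
      ring
    rw [hE, div_pow, div_le_div_iff₀ (by positivity) h1]
    have hnum : ((3-5*p)*x + (3-7*p))^2 ≤ (3*x+4)^2 := by
      have hub : (3-5*p)*x + (3-7*p) ≤ 3*x+4 := by nlinarith [mul_nonneg hp0.le (by linarith : (0:ℝ) ≤ x)]
      have hlb : -(3*x+4) ≤ (3-5*p)*x + (3-7*p) := by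
        nlinarith [mul_nonneg (by linarith : (0:ℝ) ≤ 6-5*p) (by linarith : (0:ℝ) ≤ x)]
      exact sq_le_sq' hlb hub
    calc ((3-5*p)*x + (3-7*p))^2 * (x+1) ≤ (3*x+4)^2 * (x+1) := by
          exact mul_le_mul_of_nonneg_right hnum h1.le
      _ ≤ 13 * (2*(x+3)*(x+2))^2 := by nlinarith [sq_nonneg (x-1), sq_nonneg x]
  have : (1:ℝ)/(x+1) + 13/(x+1) = 14/(x+1) := by ring
  linarith
end Stmt19Aux

open Stmt19Aux Finset in
/-- The Hoover index H_n = Σ|(n+3)deg_i - 2(n+2)|/(4(n+2)(n+3)) equals (n+1)L_n/(2(n+3)(n+2));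
its mean is (pn²+3n+3-p)/(2(n+3)(n+2)); its variance is p(1-p)(n²-1)(n+1)/(4(n+3)²(n+2)²);
and H_n → p/2 in L^r for every r > 0. -/
theorem stmt19 (p : ℝ) (hp0 : 0 < p) (hp1 : p < 1) :
    (∀ (n L : ℕ), 3 ≤ L → L ≤ n + 2 →
      (∑ i : Fin (n+3),
          |((n : ℝ)+3) *
              (if (i : ℕ) = 0 then (L : ℝ) else if (i : ℕ) ≤ L then 1 else 2)
            - 2*((n : ℝ)+2)|) / (4*((n : ℝ)+2)*((n : ℝ)+3))
        = ((n : ℝ)+1)*(L : ℝ) / (2*((n : ℝ)+3)*((n : ℝ)+2))) ∧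
    (∀ n : ℕ, 1 ≤ n → binExp (n-1) p (hooverF n) =
        (p*(n : ℝ)^2 + 3*(n : ℝ) + 3 - p) / (2*((n : ℝ)+3)*((n : ℝ)+2))) ∧
    (∀ n : ℕ, 1 ≤ n → binVar (n-1) p (hooverF n) =
        p*(1-p)*((n : ℝ)^2-1)*((n : ℝ)+1) / (4*((n : ℝ)+3)^2*((n : ℝ)+2)^2)) ∧
    (∀ r : ℝ, 0 < r → Filter.Tendsto (fun n : ℕ =>
      binExp (n-1) p (fun k => |hooverF n k - p/2| ^ r))
      Filter.atTop (𝓝 (0 : ℝ))) := by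
  refine ⟨?_, ?_, ?_, ?_⟩
  · -- Part 1
    intro n L hL3 hLn
    have hsum : (∑ i : Fin (n+3),
            |((n : ℝ)+3) *
                (if (i : ℕ) = 0 then (L : ℝ) else if (i : ℕ) ≤ L then 1 else 2)
              - 2*((n : ℝ)+2)|) = 2*((n:ℝ)+1)*(L:ℝ) := by
      rw [Fin.sum_univ_eq_sum_range
        (fun i => |((n : ℝ)+3) * (if i = 0 then (L : ℝ) else if i ≤ L then 1 else 2) - 2*((n : ℝ)+2)|)]
      rw [show n+3 = (n+2)+1 from rfl, Finset.sum_range_succ']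
      have h0 : |((n : ℝ)+3) * (if 0 = 0 then (L : ℝ) else if 0 ≤ L then 1 else 2) - 2*((n : ℝ)+2)|
          = ((n:ℝ)+3)*(L:ℝ) - 2*((n:ℝ)+2) := by
        rw [if_pos rfl, abs_of_nonneg]
        have : (3:ℝ) ≤ (L:ℝ) := by exact_mod_cast hL3
        nlinarith [Nat.cast_nonneg (α := ℝ) n]
      rw [h0]
      have hterm : ∀ i ∈ range (n+2),
          |((n : ℝ)+3) * (if i+1 = 0 then (L : ℝ) else if i+1 ≤ L then 1 else 2) - 2*((n : ℝ)+2)|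
          = if i < L then ((n:ℝ)+1) else 2 := by
        intro i _
        rw [if_neg (Nat.succ_ne_zero i)]
        by_cases h : i + 1 ≤ L
        · rw [if_pos h, if_pos (by omega)]
          rw [show ((n:ℝ)+3) * 1 - 2*((n:ℝ)+2) = -((n:ℝ)+1) by ring, abs_neg,
            abs_of_nonneg (by positivity)]
        · rw [if_neg h, if_neg (by omega)]
          rw [show ((n:ℝ)+3) * 2 - 2*((n:ℝ)+2) = 2 by ring, abs_of_nonneg (by norm_num)]
      rw [Finset.sum_congr rfl hterm]
      have hsplit : ∑ i ∈ range (n+2), (if i < L then ((n:ℝ)+1) else 2)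
          = (L:ℝ)*((n:ℝ)+1) + ((n:ℝ)+2-(L:ℝ))*2 := by
        rw [Finset.sum_ite]
        have hf1 : (range (n+2)).filter (fun i => i < L) = range L := by
          ext i; simp only [Finset.mem_filter, Finset.mem_range]; omega
        have hf2 : (range (n+2)).filter (fun i => ¬ i < L) = Finset.Ico L (n+2) := by
          ext i; simp only [Finset.mem_filter, Finset.mem_range, Finset.mem_Ico]; omega
        rw [hf1, hf2, Finset.sum_const, Finset.sum_const, Finset.card_range, Nat.card_Ico]
        have : ((n+2-L:ℕ):ℝ) = (n:ℝ)+2-(L:ℝ) := by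
          rw [Nat.cast_sub hLn]; push_cast; ring
        rw [nsmul_eq_mul, nsmul_eq_mul, this]
      rw [hsplit]
      ring
    rw [hsum]
    have h3 : ((n:ℝ)+3) ≠ 0 := by positivity
    have h2 : ((n:ℝ)+2) ≠ 0 := by positivity
    field_simp
    ring
  · -- Part 2
    exact fun n hn => mean_eq p n hn
  · -- Part 3
    intro n hn
    rw [hoover_eq, binVar_affine]
    have hm : ((n-1:ℕ):ℝ) = (n:ℝ)-1 := by rw [Nat.cast_sub hn, Nat.cast_one]
    rw [hm]
    have h3 : ((n:ℝ)+3) ≠ 0 := by positivity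
    have h2 : ((n:ℝ)+2) ≠ 0 := by positivity
    field_simp
    ring
  · -- Part 4
    intro r hr
    -- the second moment tends to zero
    have hQ : Filter.Tendsto (fun n : ℕ => binExp (n-1) p (fun k => (hooverF n k - p/2)^2))
        Filter.atTop (𝓝 (0:ℝ)) := by
      apply squeeze_zero' (g := fun n : ℕ => 14/((n:ℝ)+1))
      · exact Filter.Eventually.of_forall fun n =>
          binExp_nonneg _ hp0.le hp1.le (fun k => sq_nonneg _)
      · filter_upwards [Filter.eventually_ge_atTop 1] with n hn
        exact Qbound p hp0 hp1 n hn
      · have h : Tendsto (fun n : ℕ => 1 / ((n:ℝ) + 1)) atTop (𝓝 0) := tendsto_one_div_add_atTop_nhds_zero_nat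
        have h14 := h.const_mul (14:ℝ)
        rw [mul_zero] at h14
        convert h14 using 2 with n
        ring
    rw [NormedAddCommGroup.tendsto_nhds_zero]
    intro ε hε
    set δ : ℝ := min 1 ((ε/2) ^ (1/r)) with hδdef
    have hε2 : (0:ℝ) < ε/2 := by linarith
    have hδ0 : 0 < δ := lt_min one_pos (Real.rpow_pos_of_pos hε2 _)
    have hδr : δ ^ r ≤ ε/2 := by
      calc δ ^ r ≤ ((ε/2) ^ (1/r)) ^ r := Real.rpow_le_rpow hδ0.le (min_le_right _ _) hr.le
        _ = (ε/2) ^ ((1/r)*r) := by rw [← Real.rpow_mul hε2.le]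
        _ = ε/2 := by rw [one_div, inv_mul_cancel₀ hr.ne', Real.rpow_one]
    have hev := hQ.eventually_lt_const (show (0:ℝ) < δ^2 * (ε/2) by positivity)
    filter_upwards [hev, Filter.eventually_ge_atTop 1] with n hQn hn
    have hx1 : (1:ℝ) ≤ (n:ℝ) := by exact_mod_cast hn
    -- pointwise bound and monotonicity
    have hmono : binExp (n-1) p (fun k => |hooverF n k - p/2| ^ r)
        ≤ binExp (n-1) p (fun k => δ^r + (1/δ^2) * (hooverF n k - p/2)^2) := by
      apply binExp_mono _ hp0.le hp1.le
      intro k hk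
      have hk' : k ≤ n - 1 := by
        have := Finset.mem_range.mp hk; omega
      have hkc : (k:ℝ) ≤ (n:ℝ) - 1 := by
        have : k + 1 ≤ n := by omega
        have := (Nat.cast_le (α := ℝ)).mpr this
        push_cast at this
        linarith
      have hH0 : 0 ≤ hooverF n k := by
        unfold hooverF; positivity
      have hH1 : hooverF n k ≤ 1 := by
        unfold hooverF
        rw [div_le_one (by positivity)]
        nlinarith
      have habs0 : 0 ≤ |hooverF n k - p/2| := abs_nonneg _
      have habs1 : |hooverF n k - p/2| ≤ 1 := by
        rw [abs_le]; constructor <;> [linarith; linarith]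
      have := ptwise habs0 habs1 hδ0 hr
      rwa [sq_abs] at this
    have heq : binExp (n-1) p (fun k => δ^r + (1/δ^2) * (hooverF n k - p/2)^2)
        = δ^r + (1/δ^2) * binExp (n-1) p (fun k => (hooverF n k - p/2)^2) :=
      binExp_const_add_smul _ _ _ _ _
    have hFnn : 0 ≤ binExp (n-1) p (fun k => |hooverF n k - p/2| ^ r) :=
      binExp_nonneg _ hp0.le hp1.le (fun k => Real.rpow_nonneg (abs_nonneg _) r)
    have hlast : (1/δ^2) * binExp (n-1) p (fun k => (hooverF n k - p/2)^2) < ε/2 := by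
      rw [one_div, inv_mul_eq_div, div_lt_iff₀ (by positivity)]
      calc binExp (n-1) p (fun k => (hooverF n k - p/2)^2) < δ^2 * (ε/2) := hQn
        _ = ε/2 * δ^2 := by ring
    rw [Real.norm_eq_abs, abs_of_nonneg hFnn]
    calc binExp (n-1) p (fun k => |hooverF n k - p/2| ^ r)
        ≤ δ^r + (1/δ^2) * binExp (n-1) p (fun k => (hooverF n k - p/2)^2) := heq ▸ hmono
      _ < ε/2 + ε/2 := by exact add_lt_add_of_le_of_lt hδr hlast
      _ = ε := by ring
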